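/- The localization functor Q : Preglid FR → Glid FR admits a fully faithful left adjoint L := j_L∘φ; in particular, Glid FR is equivalent to a coreflective full subcategory of Preglid FR. -/

import Mathlib

set_option linter.unusedSectionVars false
set_option maxHeartbeats 1000000
set_option synthInstance.maxHeartbeats 1000000
set_option maxHeartbeats 2000000

noncomputable section

open CategoryTheory CategoryTheory.Limits

universe u

namespace GliderPaper

/-- A `Γ`-filtration `FR` on a unital ring `R`: additive subgroups `F γ` with
`1 ∈ F 1`, monotone in `γ`, and multiplicative. -/
structure RingFiltration (Γ : Type u) [Group Γ] [PartialOrder Γ] (R : Type u) [Ring R] where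
  F : Γ → AddSubgroup R
  one_mem : (1 : R) ∈ F 1
  mono : ∀ {α β : Γ}, α ≤ β → F α ≤ F β
  mul_mem : ∀ {α β : Γ} {a b : R}, a ∈ F α → b ∈ F β → a * b ∈ F (α * β)

variable {Γ : Type u} [Group Γ] [PartialOrder Γ]
  [CovariantClass Γ Γ (· * ·) (· ≤ ·)] [CovariantClass Γ Γ (Function.swap (· * ·)) (· ≤ ·)]
  {R : Type u} [Ring R]

/-- Objects of the extended filtered companion category `oFF_Λ R`:
the disjoint union `Λ ⊔ {∞}`. -/
inductive OFF (FR : RingFiltration Γ R) (Λ : Set Γ) : Type u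
  | of (α : Λ)
  | infty

/-- Objects of the filtered companion category `FF_Λ R`: the set `Λ`. -/
inductive FF (FR : RingFiltration Γ R) (Λ : Set Γ) : Type u
  | of (α : Λ)

variable (FR : RingFiltration Γ R) (Λ : Set Γ)

namespace OFF

/-- `le X Y` holds iff the canonical morphism `1_{X,Y}` is defined, i.e. `X ≤ Y` in `Λ`,
or `Y = ∞`. -/
def le : OFF FR Λ → OFF FR Λ → Prop
  | of α, of β => (α : Γ) ≤ (β : Γ)
  | _, infty => True
  | infty, of _ => False

open scoped Classical in
/-- The additive subgroup of `R` of morphisms `X ⟶ Y` in `oFF_Λ R`: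
`Hom(α,β) = F_{βα⁻¹}R` for `α ≤ β` in `Λ`, `Hom(X,∞) = R`, and `0` otherwise. -/
noncomputable def homGrp : OFF FR Λ → OFF FR Λ → AddSubgroup R
  | of α, of β => if (α : Γ) ≤ (β : Γ) then FR.F ((β : Γ) * (α : Γ)⁻¹) else ⊥
  | _, infty => ⊤
  | infty, of _ => ⊥

theorem le_refl' : ∀ X : OFF FR Λ, le FR Λ X X
  | of _ => _root_.le_refl _
  | infty => trivial

theorem one_mem_homGrp : ∀ {X Y : OFF FR Λ}, le FR Λ X Y → (1 : R) ∈ homGrp FR Λ X Y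
  | of α, of β, h => by
      have h' : (α : Γ) ≤ (β : Γ) := h
      have h1 : (1 : Γ) ≤ (β : Γ) * (α : Γ)⁻¹ := by
        rw [← mul_inv_cancel (α : Γ)]
        exact mul_le_mul_left h' _
      simpa [homGrp, if_pos h'] using FR.mono h1 FR.one_mem
  | of _, infty, _ => trivial
  | infty, infty, _ => trivial
  | infty, of _, h => h.elim

theorem mul_mem_homGrp : ∀ {X Y Z : OFF FR Λ} {f g : R},
    f ∈ homGrp FR Λ X Y → g ∈ homGrp FR Λ Y Z → g * f ∈ homGrp FR Λ X Z := by
  intro X Y Z f g hf hg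
  cases X <;> cases Y <;> cases Z <;> simp only [homGrp] at hf hg ⊢ <;> try trivial
  case of.of.of a b c =>
    by_cases hab : (a : Γ) ≤ (b : Γ)
    · by_cases hbc : (b : Γ) ≤ (c : Γ)
      · rw [if_pos hab] at hf
        rw [if_pos hbc] at hg
        rw [if_pos (le_trans hab hbc)]
        have := FR.mul_mem hg hf
        rwa [show (c : Γ) * (b : Γ)⁻¹ * ((b : Γ) * (a : Γ)⁻¹) = (c : Γ) * (a : Γ)⁻¹ by
          group] at this
      · rw [if_neg hbc] at hg
        rw [AddSubgroup.mem_bot] at hg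
        subst hg
        simp only [zero_mul]
        exact AddSubgroup.zero_mem _
    · rw [if_neg hab] at hf
      rw [AddSubgroup.mem_bot] at hf
      subst hf
      simp only [mul_zero]
      exact AddSubgroup.zero_mem _
  case of.infty.of a c =>
    rw [AddSubgroup.mem_bot] at hg
    subst hg
    simp only [zero_mul]
    exact AddSubgroup.zero_mem _
  case infty.of.of b c =>
    rw [AddSubgroup.mem_bot] at hf
    subst hf
    simp only [mul_zero]
    exact AddSubgroup.zero_mem _
  case infty.infty.of c =>
    rw [AddSubgroup.mem_bot] at hg
    subst hg
    simp only [zero_mul]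
    exact AddSubgroup.zero_mem _

instance : Category (OFF FR Λ) where
  Hom X Y := homGrp FR Λ X Y
  id X := ⟨1, one_mem_homGrp FR Λ (le_refl' FR Λ X)⟩
  comp f g := ⟨g.1 * f.1, mul_mem_homGrp FR Λ f.2 g.2⟩
  id_comp f := Subtype.ext (mul_one f.1)
  comp_id f := Subtype.ext (one_mul f.1)
  assoc f g h := Subtype.ext (mul_assoc h.1 g.1 f.1).symm

instance : Preadditive (OFF FR Λ) where
  homGroup X Y := inferInstanceAs (AddCommGroup (homGrp FR Λ X Y))
  add_comp _ _ _ f f' g := Subtype.ext (mul_add g.1 f.1 f'.1)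
  comp_add _ _ _ f g g' := Subtype.ext (add_mul g.1 g'.1 f.1)

end OFF

namespace FF

/-- The inclusion of the objects of `FF_Λ R` into those of `oFF_Λ R`. -/
def toOFF : FF FR Λ → OFF FR Λ
  | of α => .of α

instance : Category (FF FR Λ) where
  Hom X Y := OFF.homGrp FR Λ (toOFF FR Λ X) (toOFF FR Λ Y)
  id X := ⟨1, OFF.one_mem_homGrp FR Λ (OFF.le_refl' FR Λ _)⟩
  comp f g := ⟨g.1 * f.1, OFF.mul_mem_homGrp FR Λ f.2 g.2⟩
  id_comp f := Subtype.ext (mul_one f.1)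
  comp_id f := Subtype.ext (one_mul f.1)
  assoc f g h := Subtype.ext (mul_assoc h.1 g.1 f.1).symm

instance : Preadditive (FF FR Λ) where
  homGroup X Y := inferInstanceAs (AddCommGroup (OFF.homGrp FR Λ (toOFF FR Λ X) (toOFF FR Λ Y)))
  add_comp _ _ _ f f' g := Subtype.ext (mul_add g.1 f.1 f'.1)
  comp_add _ _ _ f g g' := Subtype.ext (add_mul g.1 g'.1 f.1)

end FF

/-- The inclusion functor `j : FF_Λ R ⥤ oFF_Λ R`. -/
def jF : FF FR Λ ⥤ OFF FR Λ where
  obj := FF.toOFF FR Λ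
  map f := f
  map_id _ := rfl
  map_comp _ _ := rfl

instance : (jF FR Λ).Additive := ⟨rfl⟩

/-- `Mod C`: the category of additive functors from `C` to abelian groups. -/
abbrev Mod (C : Type u) [Category.{u} C] [Preadditive C] : Type (u + 1) :=
  C ⥤+ AddCommGrpCat.{u}

/-- The component at `X` of a morphism in `Mod C`. -/
def mapp {C : Type u} [Category.{u} C] [Preadditive C] {M N : Mod C} (f : M ⟶ N) (X : C) :
    M.obj.obj X ⟶ N.obj.obj X :=
  (show M.obj ⟶ N.obj from f.hom).app X

/-- The canonical morphism `1_{X,Y}` in `oFF_Λ R`, given by `1_R`. -/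
def unitHom (X Y : OFF FR Λ) (h : OFF.le FR Λ X Y) : X ⟶ Y :=
  ⟨1, OFF.one_mem_homGrp FR Λ h⟩

/-- The canonical morphism `1_{α,β}` in `FF_Λ R`, given by `1_R`. -/
def unitHomFF (α β : Λ) (h : (α : Γ) ≤ (β : Γ)) : (FF.of α : FF FR Λ) ⟶ FF.of β :=
  unitHom FR Λ (.of α) (.of β) h

/-- A module `M` over `oFF_Λ R` is a preglider if all the maps `M(1_{X,Y})` are injective. -/
def IsPreglider (M : Mod (OFF FR Λ)) : Prop :=
  ∀ (X Y : OFF FR Λ) (h : OFF.le FR Λ X Y), Function.Injective (M.obj.map (unitHom FR Λ X Y h))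

/-- A module `M` over `FF_Λ R` is a prefragment if all the maps `M(1_{α,β})` are injective. -/
def IsPrefragment (M : Mod (FF FR Λ)) : Prop :=
  ∀ (α β : Λ) (h : (α : Γ) ≤ (β : Γ)), Function.Injective (M.obj.map (unitHomFF FR Λ α β h))

/-- The category of pregliders: the full subcategory of `Mod (oFF_Λ R)` of pregliders. -/
abbrev Preglid : Type (u + 1) :=
  ObjectProperty.FullSubcategory (fun M : Mod (OFF FR Λ) => IsPreglider FR Λ M)

instance : Preadditive (Preglid FR Λ) := Preadditive.fullSubcategory _

/-- The category of prefragments: the full subcategory of `Mod (FF_Λ R)` of prefragments. -/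
abbrev Prefrag : Type (u + 1) :=
  ObjectProperty.FullSubcategory (fun M : Mod (FF FR Λ) => IsPrefragment FR Λ M)

instance : Preadditive (Prefrag FR Λ) := Preadditive.fullSubcategory _

/-- The inclusion `Preglid FR Λ ⥤ Mod (oFF_Λ R)`. -/
def iotaF : Preglid FR Λ ⥤ Mod (OFF FR Λ) := ObjectProperty.ι _

/-- The inclusion `Prefrag FR Λ ⥤ Mod (FF_Λ R)`. -/
def etaF : Prefrag FR Λ ⥤ Mod (FF FR Λ) := ObjectProperty.ι _

/-- The component at `X` of a morphism of pregliders. -/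
def pgapp {M N : Preglid FR Λ} (f : M ⟶ N) (X : OFF FR Λ) :
    M.obj.obj.obj X ⟶ N.obj.obj.obj X :=
  mapp (show M.obj ⟶ N.obj from f.hom) X

/-- The component at `X` of a morphism of prefragments. -/
def pfapp {M N : Prefrag FR Λ} (f : M ⟶ N) (X : FF FR Λ) :
    M.obj.obj.obj X ⟶ N.obj.obj.obj X :=
  mapp (show M.obj ⟶ N.obj from f.hom) X

/-- The class `Σ` of morphisms of pregliders all of whose components at objects of `Λ`
are isomorphisms. -/
def SigmaClass : MorphismProperty (Preglid FR Λ) :=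
  fun _ _ f => ∀ α : Λ, IsIso (pgapp FR Λ f (.of α))

/-- The category of glider representations: the localization of `Preglid FR Λ` at `Σ`. -/
abbrev Glid : Type (u + 1) := (SigmaClass FR Λ).Localization

/-- The localization functor `Q : Preglid FR Λ ⥤ Glid FR Λ`. -/
def QF : Preglid FR Λ ⥤ Glid FR Λ := (SigmaClass FR Λ).Q

/-- The restriction functor `j^* : Mod (oFF_Λ R) ⥤ Mod (FF_Λ R)`. -/
def jStar : Mod (OFF FR Λ) ⥤ Mod (FF FR Λ) where
  obj M := ⟨jF FR Λ ⋙ M.obj, by haveI : M.obj.Additive := M.property; exact (inferInstance : (jF FR Λ ⋙ M.obj).Additive)⟩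
  map {M N} f := ObjectProperty.homMk (Functor.whiskerLeft (jF FR Λ) (show M.obj ⟶ N.obj from f.hom))
  map_id _ := rfl
  map_comp _ _ := rfl

theorem isPrefragment_jStar (M : Mod (OFF FR Λ)) (hM : IsPreglider FR Λ M) :
    IsPrefragment FR Λ ((jStar FR Λ).obj M) :=
  fun α β h => hM (.of α) (.of β) h

/-- The restriction functor `j^* : Preglid FR Λ ⥤ Prefrag FR Λ`. -/
def jRes : Preglid FR Λ ⥤ Prefrag FR Λ where
  obj M := ⟨(jStar FR Λ).obj M.obj, isPrefragment_jStar FR Λ M.obj M.property⟩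
  map f := ObjectProperty.homMk ((jStar FR Λ).map f.hom)
  map_id M := congrArg ObjectProperty.homMk ((jStar FR Λ).map_id M.obj)
  map_comp f g := congrArg ObjectProperty.homMk ((jStar FR Λ).map_comp f.hom g.hom)

theorem sigma_isInvertedBy : (SigmaClass FR Λ).IsInvertedBy (jRes FR Λ) := by
  intro M N f hf
  haveI : (AdditiveFunctor.forget (FF FR Λ) AddCommGrpCat.{u}).Faithful :=
    inferInstance
  haveI : ∀ X : FF FR Λ, IsIso
      (((ObjectProperty.ι (fun M : Mod (FF FR Λ) => IsPrefragment FR Λ M) ⋙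
        AdditiveFunctor.forget _ _).map ((jRes FR Λ).map f)).app X) := by
    rintro ⟨α⟩
    exact hf α
  haveI : IsIso ((ObjectProperty.ι (fun M : Mod (FF FR Λ) => IsPrefragment FR Λ M) ⋙
      AdditiveFunctor.forget _ _).map ((jRes FR Λ).map f)) :=
    NatIso.isIso_of_isIso_app _
  exact isIso_of_reflects_iso ((jRes FR Λ).map f)
    (ObjectProperty.ι (fun M : Mod (FF FR Λ) => IsPrefragment FR Λ M) ⋙
      AdditiveFunctor.forget _ _)

/-- The canonical fully faithful functor `φ : Glid FR Λ ⥤ Prefrag FR Λ`,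
the unique functor with `Q ⋙ φ = j^*`. -/
def phiF : Glid FR Λ ⥤ Prefrag FR Λ :=
  Localization.Construction.lift (jRes FR Λ) (sigma_isInvertedBy FR Λ)

theorem phiF_fac : QF FR Λ ⋙ phiF FR Λ = jRes FR Λ :=
  Localization.Construction.fac _ _


section Statements

variable {Γ : Type u} [Group Γ] [PartialOrder Γ]
  [CovariantClass Γ Γ (· * ·) (· ≤ ·)] [CovariantClass Γ Γ (Function.swap (· * ·)) (· ≤ ·)]
  {R : Type u} [Ring R]

namespace Aux

variable (FR : RingFiltration Γ R) (Λ : Set Γ)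

lemma isIso_of_bijective {A B : AddCommGrpCat.{u}} (f : A ⟶ B) (hf : Function.Bijective f) :
    IsIso f := by
  let e : A ≃+ B := AddEquiv.ofBijective (show A →+ B from f.hom) hf
  refine ⟨AddCommGrpCat.ofHom e.symm.toAddMonoidHom, ?_, ?_⟩
  · ext x
    show e.symm (e x) = x
    exact e.symm_apply_apply x
  · ext x
    show e (e.symm x) = x
    exact e.apply_symm_apply x

section subMod

variable (B : Mod (OFF FR Λ)) (S : ∀ X : OFF FR Λ, AddSubgroup (B.obj.obj X))
  (hS : ∀ {X Y : OFF FR Λ} (f : X ⟶ Y) (x : B.obj.obj X), x ∈ S X → (B.obj.map f) x ∈ S Y)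

/-- The underlying map of the subfunctor. -/
def subMap {X Y : OFF FR Λ} (f : X ⟶ Y) :
    AddCommGrpCat.of (S X) ⟶ AddCommGrpCat.of (S Y) :=
  AddCommGrpCat.ofHom
    { toFun := fun x => ⟨(B.obj.map f) x.1, hS f x.1 x.2⟩
      map_zero' := Subtype.ext (by simpa using map_zero (show _ →+ _ from (B.obj.map f).hom))
      map_add' := fun a b => Subtype.ext (map_add (show _ →+ _ from (B.obj.map f).hom) a.1 b.1) }

@[simp] lemma subMap_coe {X Y : OFF FR Λ} (f : X ⟶ Y) (x : AddCommGrpCat.of (S X)) :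
    ((subMap FR Λ B S hS f) x).1 = (B.obj.map f) x.1 := rfl

/-- The subfunctor of `B` determined by the subgroups `S`. -/
def subFun : OFF FR Λ ⥤ AddCommGrpCat.{u} where
  obj X := AddCommGrpCat.of (S X)
  map f := subMap FR Λ B S hS f
  map_id X := by
    ext x
    show (B.obj.map (𝟙 X)) x.1 = x.1
    rw [B.obj.map_id]
    rfl
  map_comp {X Y Z} f g := by
    ext x
    show (B.obj.map (f ≫ g)) x.1 = (B.obj.map g) ((B.obj.map f) x.1)
    rw [B.obj.map_comp]
    rfl

instance : (subFun FR Λ B S hS).Additive where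
  map_add {X Y f g} := by
    ext x
    refine Subtype.ext ?_
    show (B.obj.map (f + g)) x.1 = _
    haveI := B.property
    rw [B.obj.map_add]
    rfl

/-- Subfunctor of a module over `oFF_Λ R`, as a module. -/
def subMod : Mod (OFF FR Λ) := ⟨subFun FR Λ B S hS, (inferInstance : (subFun FR Λ B S hS).Additive)⟩

end subMod



section G1

variable {FR Λ} (B : Mod (OFF FR Λ)) (S : ∀ X : OFF FR Λ, AddSubgroup (B.obj.obj X))
  (hS : ∀ {X Y : OFF FR Λ} (f : X ⟶ Y) (x : B.obj.obj X), x ∈ S X → (B.obj.map f) x ∈ S Y)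

lemma subMod_isPreglider (hB : IsPreglider FR Λ B) :
    IsPreglider FR Λ (subMod FR Λ B S hS) := by
  intro X Y h a b hab
  refine Subtype.ext ?_
  exact hB X Y h (congrArg Subtype.val hab)

/-- The inclusion of the subfunctor. -/
def subIncl : subFun FR Λ B S hS ⟶ B.obj where
  app X := AddCommGrpCat.ofHom (S X).subtype
  naturality X Y f := by
    ext x
    rfl

variable (κf : Mod (OFF FR Λ) ⥤ Preglid FR Λ) (adjk : κf ⊣ iotaF FR Λ)

lemma unitk_surjective (N : Mod (OFF FR Λ)) (X : OFF FR Λ) :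
    Function.Surjective (mapp (adjk.unit.app N) X) := by
  classical
  set B : Mod (OFF FR Λ) := (iotaF FR Λ).obj (κf.obj N) with hBdef
  set h : N ⟶ B := adjk.unit.app N with hhdef
  let S : ∀ Y : OFF FR Λ, AddSubgroup (B.obj.obj Y) :=
    fun Y => (mapp h Y).hom.range
  have hS : ∀ {X Y : OFF FR Λ} (f : X ⟶ Y) (x : B.obj.obj X), x ∈ S X → (B.obj.map f) x ∈ S Y := by
    intro X Y f x hx
    obtain ⟨a, rfl⟩ := hx
    refine ⟨(N.obj.map f) a, ?_⟩
    exact ConcreteCategory.congr_hom ((show N.obj ⟶ B.obj from h.hom).naturality f) a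
  let I : Mod (OFF FR Λ) := subMod FR Λ B S hS
  have hI : IsPreglider FR Λ I := subMod_isPreglider B S hS (κf.obj N).property
  let I' : Preglid FR Λ := ⟨I, hI⟩
  let corest : N.obj ⟶ subFun FR Λ B S hS :=
    { app := fun Y => AddCommGrpCat.ofHom (mapp h Y).hom.rangeRestrict
      naturality := by
        intro X Y f
        ext a
        refine Subtype.ext ?_
        exact ConcreteCategory.congr_hom ((show N.obj ⟶ B.obj from h.hom).naturality f) a }
  let m : κf.obj N ⟶ I' := (adjk.homEquiv N I').symm (show N ⟶ (iotaF FR Λ).obj I' from ObjectProperty.homMk corest)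
  have key : m ≫ (show I' ⟶ κf.obj N from ObjectProperty.homMk (ObjectProperty.homMk (subIncl B S hS))) = 𝟙 (κf.obj N) := by
    apply (adjk.homEquiv N (κf.obj N)).injective
    rw [Adjunction.homEquiv_naturality_right]
    rw [Equiv.apply_symm_apply]
    rw [Adjunction.homEquiv_unit]
    simp only [Functor.map_id, Category.comp_id]
    rfl
  intro y
  have hy := DFunLike.congr_fun (congrArg (fun (t : κf.obj N ⟶ κf.obj N) => (mapp t.hom X).hom) key) y
  obtain ⟨a, ha⟩ := (mapp m.hom X y).2
  exact ⟨a, ha.trans hy⟩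

end G1

section G2

variable {FR Λ} (jb : Mod (FF FR Λ) ⥤ Mod (OFF FR Λ)) (adjj : jb ⊣ jStar FR Λ)

lemma unitj_surjective (P : Mod (FF FR Λ)) (α : Λ) :
    Function.Surjective (mapp (adjj.unit.app P) (FF.of α)) := by
  set B : Mod (OFF FR Λ) := jb.obj P with hBdef
  set h : P ⟶ (jStar FR Λ).obj B := adjj.unit.app P with hhdef
  let S : ∀ Y : OFF FR Λ, AddSubgroup (B.obj.obj Y) := fun Y =>
    match Y with
    | OFF.of β => (mapp h (FF.of β)).hom.range
    | OFF.infty => ⊤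
  have hS : ∀ {X Y : OFF FR Λ} (f : X ⟶ Y) (x : B.obj.obj X), x ∈ S X → (B.obj.map f) x ∈ S Y := by
    intro X Y f x hx
    match X, Y, f with
    | X, OFF.infty, f => exact AddSubgroup.mem_top _
    | OFF.of β, OFF.of γ, f =>
        obtain ⟨a, rfl⟩ := hx
        exact ⟨(P.obj.map (show FF.of β ⟶ FF.of γ from f)) a,
          ConcreteCategory.congr_hom ((show P.obj ⟶ ((jStar FR Λ).obj B).obj from h.hom).naturality
            (show FF.of β ⟶ FF.of γ from f)) a⟩
    | OFF.infty, OFF.of γ, f =>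
        have hf : f = 0 := Subtype.ext ((AddSubgroup.mem_bot).1 f.2)
        rw [hf]
        haveI := B.property
        rw [Functor.map_zero]
        exact AddSubgroup.zero_mem _
  let N' : Mod (OFF FR Λ) := subMod FR Λ B S hS
  let corest : P.obj ⟶ ((jStar FR Λ).obj N').obj :=
    { app := fun X =>
        match X with
        | FF.of β => AddCommGrpCat.ofHom (mapp h (FF.of β)).hom.rangeRestrict
      naturality := by
        intro X Y f
        match X, Y, f with
        | FF.of β, FF.of γ, f =>
          ext a
          refine Subtype.ext ?_
          exact ConcreteCategory.congr_hom ((show P.obj ⟶ ((jStar FR Λ).obj B).obj from h.hom).naturality f) a }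
  let m : B ⟶ N' := (adjj.homEquiv P N').symm (show P ⟶ (jStar FR Λ).obj N' from ObjectProperty.homMk corest)
  have key : m ≫ (show N' ⟶ B from ObjectProperty.homMk (subIncl B S hS)) = 𝟙 B := by
    apply (adjj.homEquiv P B).injective
    rw [Adjunction.homEquiv_naturality_right]
    rw [Equiv.apply_symm_apply]
    rw [Adjunction.homEquiv_unit]
    simp only [Functor.map_id, Category.comp_id]
    rfl
  intro y
  have hy := DFunLike.congr_fun (congrArg (fun (t : B ⟶ B) => (mapp t (OFF.of α)).hom) key) y
  obtain ⟨a, ha⟩ := (mapp m (OFF.of α) y).2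
  exact ⟨a, ha.trans hy⟩

end G2


section A1

variable {FR Λ} (κf : Mod (OFF FR Λ) ⥤ Preglid FR Λ) (adjk : κf ⊣ iotaF FR Λ)
  (jb : Mod (FF FR Λ) ⥤ Mod (OFF FR Λ)) (adjj : jb ⊣ jStar FR Λ)

/-- The composite left adjoint `j_L = κ ∘ j_! ∘ η`. -/
def L1 : Prefrag FR Λ ⥤ Preglid FR Λ := etaF FR Λ ⋙ jb ⋙ κf

variable (FR Λ) in
/-- `η` is fully faithful. -/
def etaFF : (etaF FR Λ).FullyFaithful := ObjectProperty.fullyFaithfulι _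

/-- First commutative square. -/
def comm1 : etaF FR Λ ⋙ (jb ⋙ κf) ≅ L1 κf jb ⋙ 𝟭 (Preglid FR Λ) :=
  (Functor.rightUnitor (L1 κf jb)).symm

variable (FR Λ) in
/-- Second commutative square. -/
def comm2 : 𝟭 (Preglid FR Λ) ⋙ (iotaF FR Λ ⋙ jStar FR Λ) ≅ jRes FR Λ ⋙ etaF FR Λ :=
  NatIso.ofComponents (fun M => Iso.refl _) (by
    intro M N f
    simp only [Iso.refl_hom, Category.comp_id, Category.id_comp]
    rfl)

/-- The adjunction `j_L ⊣ j^*` between prefragments and pregliders. -/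
noncomputable def A1 : L1 κf jb ⊣ jRes FR Λ :=
  (adjj.comp adjk).restrictFullyFaithful (etaFF FR Λ) (Functor.FullyFaithful.id _)
    (comm1 κf jb) (comm2 FR Λ)

lemma comm1_hom_app (P : Prefrag FR Λ) :
    (comm1 κf jb).hom.app P = 𝟙 _ := rfl

variable (FR Λ) in
lemma comm2_hom_app (M : Preglid FR Λ) :
    (comm2 FR Λ).hom.app M = 𝟙 _ := rfl

lemma A1_unit_surj (P : Prefrag FR Λ) (α : Λ) :
    Function.Surjective (pfapp FR Λ ((A1 κf adjk jb adjj).unit.app P) (FF.of α)) := by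
  have hu : (etaF FR Λ).map ((A1 κf adjk jb adjj).unit.app P) = _ :=
    Adjunction.map_restrictFullyFaithful_unit_app (adjj.comp adjk) (etaFF FR Λ)
      (Functor.FullyFaithful.id _) (comm1 κf jb) (comm2 FR Λ) P
  simp only [Adjunction.comp_unit_app] at hu
  show Function.Surjective (mapp ((etaF FR Λ).map ((A1 κf adjk jb adjj).unit.app P)) (FF.of α))
  rw [hu]
  intro y
  obtain ⟨z, hz⟩ := unitk_surjective κf adjk (jb.obj P.obj) (OFF.of α) y
  obtain ⟨x, hx⟩ := unitj_surjective jb adjj P.obj α z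
  refine ⟨x, ?_⟩
  show mapp (adjk.unit.app (jb.obj P.obj)) (OFF.of α)
      (mapp (adjj.unit.app P.obj) (FF.of α) x) = y
  rw [hx]
  exact hz

lemma A1_unit_isIso (M : Preglid FR Λ) :
    IsIso ((A1 κf adjk jb adjj).unit.app ((jRes FR Λ).obj M)) := by
  have htri := (A1 κf adjk jb adjj).right_triangle_components M
  set u := (A1 κf adjk jb adjj).unit.app ((jRes FR Λ).obj M) with hu
  have hcomp : ∀ α : Λ, IsIso (pfapp FR Λ u (FF.of α)) := by
    intro α
    apply isIso_of_bijective
    constructor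
    · have key : ∀ x, pfapp FR Λ ((jRes FR Λ).map ((A1 κf adjk jb adjj).counit.app M)) (FF.of α)
          (pfapp FR Λ u (FF.of α) x) = x := fun x =>
        DFunLike.congr_fun (congrArg
          (fun (t : (jRes FR Λ).obj M ⟶ (jRes FR Λ).obj M) => (pfapp FR Λ t (FF.of α)).hom) htri) x
      intro a b hab
      rw [← key a, ← key b, hab]
    · exact A1_unit_surj κf adjk jb adjj ((jRes FR Λ).obj M) α
  haveI : (AdditiveFunctor.forget (FF FR Λ) AddCommGrpCat.{u}).Faithful :=
    inferInstance
  haveI : ∀ X : FF FR Λ, IsIso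
      (((ObjectProperty.ι (fun M : Mod (FF FR Λ) => IsPrefragment FR Λ M) ⋙
        AdditiveFunctor.forget _ _).map u).app X) := by
    rintro ⟨α⟩
    exact hcomp α
  haveI : IsIso ((ObjectProperty.ι (fun M : Mod (FF FR Λ) => IsPrefragment FR Λ M) ⋙
      AdditiveFunctor.forget _ _).map u) :=
    NatIso.isIso_of_isIso_app _
  exact isIso_of_reflects_iso u
    (ObjectProperty.ι (fun M : Mod (FF FR Λ) => IsPrefragment FR Λ M) ⋙
      AdditiveFunctor.forget _ _)

lemma A1_counit_sigma (M : Preglid FR Λ) :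
    SigmaClass FR Λ ((A1 κf adjk jb adjj).counit.app M) := by
  intro α
  haveI := A1_unit_isIso κf adjk jb adjj M
  have htri := (A1 κf adjk jb adjj).right_triangle_components M
  have hmapiso : IsIso ((jRes FR Λ).map ((A1 κf adjk jb adjj).counit.app M)) := by
    rw [IsIso.eq_inv_of_hom_inv_id htri]
    infer_instance
  exact inferInstanceAs (IsIso
    (((ObjectProperty.ι (fun M : Mod (FF FR Λ) => IsPrefragment FR Λ M) ⋙
      AdditiveFunctor.forget _ _).map
        ((jRes FR Λ).map ((A1 κf adjk jb adjj).counit.app M))).app (FF.of α)))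

end A1


section Final

variable {FR Λ} (κf : Mod (OFF FR Λ) ⥤ Preglid FR Λ) (adjk : κf ⊣ iotaF FR Λ)
  (jb : Mod (FF FR Λ) ⥤ Mod (OFF FR Λ)) (adjj : jb ⊣ jStar FR Λ)

variable (FR Λ) in
instance : (QF FR Λ).IsLocalization (SigmaClass FR Λ) :=
  inferInstanceAs ((SigmaClass FR Λ).Q.IsLocalization _)

variable (FR Λ) in
lemma QphiF_map {M N : Preglid FR Λ} (f : M ⟶ N) :
    (phiF FR Λ).map ((QF FR Λ).map f) = (jRes FR Λ).map f := by
  have h := Functor.congr_hom (phiF_fac FR Λ) f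
  exact h.trans (by erw [eqToHom_refl, eqToHom_refl, Category.id_comp, Category.comp_id])

lemma LQ_map {M N : Preglid FR Λ} (f : M ⟶ N) :
    (phiF FR Λ ⋙ L1 κf jb).map ((QF FR Λ).map f) = (jRes FR Λ ⋙ L1 κf jb).map f := by
  show (L1 κf jb).map ((phiF FR Λ).map ((QF FR Λ).map f)) = (L1 κf jb).map ((jRes FR Λ).map f)
  rw [QphiF_map]
  rfl

/-- The natural transformation `Q(ε)`. -/
def delta : (jRes FR Λ ⋙ L1 κf jb) ⋙ QF FR Λ ⟶ QF FR Λ where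
  app M := (QF FR Λ).map ((A1 κf adjk jb adjj).counit.app M)
  naturality M N f := by
    rw [Functor.comp_map, ← Functor.map_comp, ← Functor.map_comp]
    congr 1
    exact (A1 κf adjk jb adjj).counit.naturality f

instance delta_app_isIso (M : Preglid FR Λ) : IsIso ((delta κf adjk jb adjj).app M) :=
  Localization.inverts (QF FR Λ) (SigmaClass FR Λ) _ (A1_counit_sigma κf adjk jb adjj M)

instance delta_isIso : IsIso (delta κf adjk jb adjj) :=
  NatIso.isIso_of_isIso_app _

/-- The lifting data for `L ⋙ Q`. -/
def liftLQ : Localization.Lifting (QF FR Λ) (SigmaClass FR Λ)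
    ((jRes FR Λ ⋙ L1 κf jb) ⋙ QF FR Λ) ((phiF FR Λ ⋙ L1 κf jb) ⋙ QF FR Λ) :=
  ⟨NatIso.ofComponents (fun M => Iso.refl _) (by
    intro M N f
    simp only [Iso.refl_hom, Category.comp_id, Category.id_comp]
    show (QF FR Λ).map ((phiF FR Λ ⋙ L1 κf jb).map ((QF FR Λ).map f)) =
      (QF FR Λ).map ((jRes FR Λ ⋙ L1 κf jb).map f)
    rw [LQ_map]; rfl)⟩

/-- The unit of the localized adjunction. -/
noncomputable def unitFin : 𝟭 (Glid FR Λ) ⟶ (phiF FR Λ ⋙ L1 κf jb) ⋙ QF FR Λ :=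
  letI := liftLQ κf jb
  Localization.liftNatTrans (QF FR Λ) (SigmaClass FR Λ) (QF FR Λ)
    ((jRes FR Λ ⋙ L1 κf jb) ⋙ QF FR Λ) (𝟭 _) ((phiF FR Λ ⋙ L1 κf jb) ⋙ QF FR Λ)
    (inv (delta κf adjk jb adjj))

lemma unitFin_app (M : Preglid FR Λ) :
    (unitFin κf adjk jb adjj).app ((QF FR Λ).obj M) = inv ((delta κf adjk jb adjj).app M) := by
  letI := liftLQ κf jb
  show (Localization.liftNatTrans (QF FR Λ) (SigmaClass FR Λ) (QF FR Λ)
    ((jRes FR Λ ⋙ L1 κf jb) ⋙ QF FR Λ) (𝟭 _) ((phiF FR Λ ⋙ L1 κf jb) ⋙ QF FR Λ)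
    (inv (delta κf adjk jb adjj))).app ((QF FR Λ).obj M) = _
  rw [Localization.liftNatTrans_app]
  show 𝟙 _ ≫ (inv (delta κf adjk jb adjj)).app M ≫ 𝟙 _ = _
  rw [Category.comp_id, Category.id_comp, NatIso.isIso_inv_app]

/-- The key identity for the counit. -/
lemma counit_K (M : Preglid FR Λ) :
    (A1 κf adjk jb adjj).counit.app ((L1 κf jb).obj ((jRes FR Λ).obj M)) =
      (jRes FR Λ ⋙ L1 κf jb).map ((A1 κf adjk jb adjj).counit.app M) := by
  haveI := A1_unit_isIso κf adjk jb adjj M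
  have h1 := (A1 κf adjk jb adjj).left_triangle_components ((jRes FR Λ).obj M)
  have h2 := (A1 κf adjk jb adjj).right_triangle_components M
  have e2 : (jRes FR Λ).map ((A1 κf adjk jb adjj).counit.app M) =
      inv ((A1 κf adjk jb adjj).unit.app ((jRes FR Λ).obj M)) :=
    IsIso.eq_inv_of_hom_inv_id h2
  have e1 : (A1 κf adjk jb adjj).counit.app ((L1 κf jb).obj ((jRes FR Λ).obj M)) =
      inv ((L1 κf jb).map ((A1 κf adjk jb adjj).unit.app ((jRes FR Λ).obj M))) :=
    IsIso.eq_inv_of_hom_inv_id h1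
  rw [e1, Functor.comp_map, e2, Functor.map_inv]

/-- The adjunction `L ⊣ Q`. -/
noncomputable def adjFin : (phiF FR Λ ⋙ L1 κf jb) ⊣ QF FR Λ where
  unit := unitFin κf adjk jb adjj
  counit :=
    { app := fun M => (A1 κf adjk jb adjj).counit.app M
      naturality := by
        intro M N f
        show (QF FR Λ ⋙ (phiF FR Λ ⋙ L1 κf jb)).map f ≫ _ = _ ≫ (𝟭 _).map f
        rw [show (QF FR Λ ⋙ (phiF FR Λ ⋙ L1 κf jb)).map f = (jRes FR Λ ⋙ L1 κf jb).map f from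
          LQ_map κf jb f]
        exact (A1 κf adjk jb adjj).counit.naturality f }
  left_triangle_components := by
    rintro ⟨⟨M⟩⟩
    show (phiF FR Λ ⋙ L1 κf jb).map
        ((unitFin κf adjk jb adjj).app ((QF FR Λ).obj M)) ≫
        (A1 κf adjk jb adjj).counit.app ((L1 κf jb).obj ((jRes FR Λ).obj M)) =
        𝟙 ((L1 κf jb).obj ((jRes FR Λ).obj M))
    rw [unitFin_app, counit_K]
    erw [Functor.map_inv]
    erw [IsIso.inv_comp_eq]
    exact (LQ_map κf jb _).symm.trans (Category.comp_id _).symm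
  right_triangle_components := by
    intro M
    show (unitFin κf adjk jb adjj).app ((QF FR Λ).obj M) ≫
        (QF FR Λ).map ((A1 κf adjk jb adjj).counit.app M) = 𝟙 ((QF FR Λ).obj M)
    rw [unitFin_app]
    exact IsIso.inv_hom_id ((delta κf adjk jb adjj).app M)

lemma unitFin_isIso : IsIso (adjFin κf adjk jb adjj).unit := by
  haveI : ∀ X, IsIso ((adjFin κf adjk jb adjj).unit.app X) := by
    rintro ⟨⟨M⟩⟩
    show IsIso ((unitFin κf adjk jb adjj).app ((QF FR Λ).obj M))
    rw [unitFin_app]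
    exact IsIso.inv_isIso (f := (delta κf adjk jb adjj).app M)
  exact NatIso.isIso_of_isIso_app _

end Final

end Aux

/-- The localization functor `Q : Preglid FR ⥤ Glid FR` admits a fully
faithful left adjoint `L := j_L ∘ φ` (where `j_L = κ ∘ j_! ∘ η` is the left adjoint of the
restricted functor `j^*`); in particular `Glid FR` is equivalent, via the fully faithful
functor `L`, to a coreflective full subcategory of `Preglid FR`. -/
theorem statement_7 (FR : RingFiltration Γ R) (Λ : Set Γ) :
    ∀ (κ : Mod (OFF FR Λ) ⥤ Preglid FR Λ), (κ ⊣ iotaF FR Λ) →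
      ∀ (jbang : Mod (FF FR Λ) ⥤ Mod (OFF FR Λ)), (jbang ⊣ jStar FR Λ) →
      Nonempty ((phiF FR Λ ⋙ (etaF FR Λ ⋙ jbang ⋙ κ)) ⊣ QF FR Λ) ∧
      (phiF FR Λ ⋙ (etaF FR Λ ⋙ jbang ⋙ κ)).Full ∧
      (phiF FR Λ ⋙ (etaF FR Λ ⋙ jbang ⋙ κ)).Faithful := by
  intro κ adjk jbang adjj
  haveI : IsIso (Aux.adjFin κ adjk jbang adjj).unit := Aux.unitFin_isIso κ adjk jbang adjj
  let ff := (Aux.adjFin κ adjk jbang adjj).fullyFaithfulLOfIsIsoUnit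
  exact ⟨⟨Aux.adjFin κ adjk jbang adjj⟩, ff.full, ff.faithful⟩

end Statements

end GliderPaper
end
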